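/- Let d ≥ 2, let R ∈ ℝ^{d×d}, t ∈ ℝ^d, p ∈ ℝ^d, ω ≥ 0, and let ℓ = {q ∈ ℝ^d : ‖Vq − b‖ = 0} for a matrix V ∈ ℝ^{(d−1)×d} with orthonormal rows and b ∈ ℝ^{d−1}. Then ω·dist(Rp − t, ℓ) = ‖(x(R,t)ᵀs₁, …, x(R,t)ᵀs_{d−1})‖₂, where x(R,t) ∈ ℝ^{d²+d+1} stacks the rows of R, −tᵀ, and −1, and s_k = ω·(V_{k,1}pᵀ | ⋯ | V_{k,d}pᵀ | V_{k*} | b_k)ᵀ. Consequently, (1/√d)·‖(x(R,t)ᵀs_k)_k‖₁ ≤ ω·dist(Rp−t, ℓ) ≤ ‖(x(R,t)ᵀs_k)_k‖₁. -/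

import Mathlib

open Metric Matrix

private lemma infDist_core_stmt19 {n d : ℕ} (V : Matrix (Fin n) (Fin d) ℝ)
    (hV : V * V.transpose = 1) (b : Fin n → ℝ)
    (x : EuclideanSpace ℝ (Fin d)) :
    Metric.infDist x {q : EuclideanSpace ℝ (Fin d) | V.mulVec q = b} =
      ‖Matrix.toEuclideanLin V x - (WithLp.equiv 2 (Fin n → ℝ)).symm b‖ := by
  set L := Matrix.toEuclideanLin V with hL
  set M := Matrix.toEuclideanLin V.transpose with hM
  have hMadj : M = LinearMap.adjoint L := by
    rw [hM, hL, ← Matrix.toEuclideanLin_conjTranspose_eq_adjoint]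
    congr 1
  have hLM : ∀ v, L (M v) = v := by
    intro v
    show (WithLp.equiv 2 _).symm (V *ᵥ (V.transpose *ᵥ (WithLp.equiv 2 _) v)) = v
    rw [Matrix.mulVec_mulVec, hV, Matrix.one_mulVec]
    rfl
  have hMnorm : ∀ v, ‖M v‖ = ‖v‖ := by
    intro v
    have h1 : (inner ℝ (M v) (M v) : ℝ) = inner ℝ v v := by
      rw [hMadj, LinearMap.adjoint_inner_left, ← hMadj, hLM]
    rw [real_inner_self_eq_norm_sq, real_inner_self_eq_norm_sq] at h1
    have := congrArg Real.sqrt h1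
    rwa [Real.sqrt_sq (norm_nonneg _), Real.sqrt_sq (norm_nonneg _)] at this
  have hLle : ∀ y, ‖L y‖ ≤ ‖y‖ := by
    intro y
    have h : ‖L y‖ ^ 2 ≤ ‖L y‖ * ‖y‖ := by
      calc ‖L y‖ ^ 2 = (inner ℝ (L y) (L y) : ℝ) := (real_inner_self_eq_norm_sq _).symm
        _ = inner ℝ (M (L y)) y := by rw [hMadj, LinearMap.adjoint_inner_left]
        _ ≤ ‖M (L y)‖ * ‖y‖ := real_inner_le_norm _ _
        _ = ‖L y‖ * ‖y‖ := by rw [hMnorm]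
    nlinarith [norm_nonneg (L y), norm_nonneg y]
  set c : EuclideanSpace ℝ (Fin n) := (WithLp.equiv 2 (Fin n → ℝ)).symm b with hc
  have hqset : ∀ q : EuclideanSpace ℝ (Fin d),
      q ∈ {q : EuclideanSpace ℝ (Fin d) | V.mulVec q = b} ↔ L q = c := fun q => by
    show V *ᵥ q.ofLp = b ↔ WithLp.toLp 2 (V *ᵥ q.ofLp) = WithLp.toLp 2 b
    exact ⟨fun h => by rw [h], fun h => congrArg WithLp.ofLp h⟩
  set q0 : EuclideanSpace ℝ (Fin d) := x - M (L x - c) with hq0def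
  have hq0 : L q0 = c := by
    rw [hq0def, map_sub, hLM]
    abel
  have hmem : q0 ∈ {q : EuclideanSpace ℝ (Fin d) | V.mulVec q = b} := (hqset q0).2 hq0
  have upper : Metric.infDist x {q : EuclideanSpace ℝ (Fin d) | V.mulVec q = b} ≤ ‖L x - c‖ := by
    have h := Metric.infDist_le_dist_of_mem (x := x) hmem
    rw [dist_eq_norm] at h
    have : x - q0 = M (L x - c) := by rw [hq0def]; abel
    rwa [this, hMnorm] at h
  have hne : Set.Nonempty {q : EuclideanSpace ℝ (Fin d) | V.mulVec q = b} := ⟨q0, hmem⟩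
  have lower : ‖L x - c‖ ≤ Metric.infDist x {q : EuclideanSpace ℝ (Fin d) | V.mulVec q = b} := by
    rw [Metric.infDist_eq_iInf]
    haveI := hne.to_subtype
    apply le_ciInf
    rintro ⟨q, hq⟩
    have h2 : L x - c = L (x - q) := by rw [map_sub, (hqset q).1 hq]
    rw [h2, dist_eq_norm]
    exact hLle _
  exact le_antisymm upper lower

/-- Linearization of the point-to-line distance used in the coreset
construction. With `ℓ = {q : ‖V q − b‖ = 0}` for `V` with orthonormal rows,
`x(R,t)` stacking the rows of `R`, `−t` and `−1`, and
`s_k = ω (V_{k,1} pᵀ | ⋯ | V_{k,d} pᵀ | V_{k*} | b_k)ᵀ`, we have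
`ω dist(Rp − t, ℓ) = ‖(x(R,t)ᵀ s₁, …, x(R,t)ᵀ s_{d−1})‖₂`, and consequently
`(1/√d) ‖(x(R,t)ᵀ s_k)_k‖₁ ≤ ω dist(Rp − t, ℓ) ≤ ‖(x(R,t)ᵀ s_k)_k‖₁`. -/
theorem stmt19 (d : ℕ) (hd : 2 ≤ d)
    (R : Matrix (Fin d) (Fin d) ℝ) (t p : EuclideanSpace ℝ (Fin d))
    (ω : ℝ) (hω : 0 ≤ ω)
    (V : Matrix (Fin (d - 1)) (Fin d) ℝ)
    (hV : V * V.transpose = 1)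
    (b : Fin (d - 1) → ℝ)
    (ℓ : Set (EuclideanSpace ℝ (Fin d)))
    (hℓ : ℓ = {q : EuclideanSpace ℝ (Fin d) | V.mulVec q = b})
    -- the stacked vector x(R,t) ∈ ℝ^{d²+d+1}
    (xvec : (Fin d × Fin d) ⊕ (Fin d ⊕ Unit) → ℝ)
    (hxvec : xvec = Sum.elim (fun ij => R ij.1 ij.2)
      (Sum.elim (fun j => -t j) (fun _ => -1)))
    -- the vectors s_k ∈ ℝ^{d²+d+1}
    (s : Fin (d - 1) → (Fin d × Fin d) ⊕ (Fin d ⊕ Unit) → ℝ)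
    (hs : ∀ k, s k = fun idx => ω * Sum.elim (fun ij => V k ij.1 * p ij.2)
      (Sum.elim (fun j => V k j) (fun _ => b k)) idx)
    -- the aligned point R p − t
    (Rpt : EuclideanSpace ℝ (Fin d))
    (hRpt : ∀ i, Rpt i = R.mulVec p i - t i) :
    ω * Metric.infDist Rpt ℓ =
      Real.sqrt (∑ k, (∑ idx, xvec idx * s k idx) ^ 2) ∧
    (1 / Real.sqrt d) * ∑ k, |∑ idx, xvec idx * s k idx| ≤ ω * Metric.infDist Rpt ℓ ∧
    ω * Metric.infDist Rpt ℓ ≤ ∑ k, |∑ idx, xvec idx * s k idx| := by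
  -- Step 1: the linearization identity for each coordinate
  have hsum : ∀ k, (∑ idx, xvec idx * s k idx) = ω * (V.mulVec Rpt k - b k) := by
    intro k
    subst hxvec
    rw [hs]
    rw [Fintype.sum_sum_type, Fintype.sum_sum_type, Fintype.sum_prod_type]
    simp only [Sum.elim_inl, Sum.elim_inr]
    have hunit : ∑ _u : Unit, (-1 : ℝ) * (ω * b k) = -(ω * b k) := by simp
    rw [hunit]
    have h2 : ∑ j, (-t j) * (ω * V k j) = -∑ j, ω * (V k j * t j) := by
      rw [← Finset.sum_neg_distrib]
      exact Finset.sum_congr rfl fun j _ => by ring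
    rw [h2]
    have h3 : ∀ i, ∑ j, R i j * (ω * (V k i * p j)) = ω * (V k i * (R.mulVec p) i) := by
      intro i
      simp only [Matrix.mulVec, dotProduct]
      rw [Finset.mul_sum, Finset.mul_sum]
      exact Finset.sum_congr rfl fun j _ => by ring
    simp only [h3]
    have h4 : V.mulVec Rpt k = ∑ i, V k i * Rpt i := rfl
    rw [h4, mul_sub, Finset.mul_sum]
    have h5 : ∑ i, ω * (V k i * Rpt i)
        = ∑ i, ω * (V k i * (R.mulVec p) i) - ∑ i, ω * (V k i * t i) := by
      rw [← Finset.sum_sub_distrib]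
      exact Finset.sum_congr rfl fun i _ => by rw [hRpt]; ring
    rw [h5]
    ring
  -- Step 2: the distance formula
  have hdist : Metric.infDist Rpt ℓ =
      Real.sqrt (∑ k, (V.mulVec Rpt k - b k) ^ 2) := by
    rw [hℓ]
    refine (infDist_core_stmt19 V hV b Rpt).trans ?_
    rw [EuclideanSpace.norm_eq]
    congr 1
    refine Finset.sum_congr rfl fun k _ => ?_
    have : (Matrix.toEuclideanLin V Rpt - (WithLp.equiv 2 (Fin (d-1) → ℝ)).symm b) k =
        V.mulVec Rpt k - b k := rfl
    rw [this, Real.norm_eq_abs, sq_abs]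
  -- the key equality
  have key : ω * Metric.infDist Rpt ℓ =
      Real.sqrt (∑ k, (∑ idx, xvec idx * s k idx) ^ 2) := by
    rw [hdist, ← Real.sqrt_sq hω, ← Real.sqrt_mul (sq_nonneg ω), Finset.mul_sum]
    congr 1
    refine Finset.sum_congr rfl fun k _ => ?_
    rw [hsum k]
    ring
  refine ⟨key, ?_, ?_⟩
  · -- lower bound
    rw [key]
    set a : Fin (d - 1) → ℝ := fun k => ∑ idx, xvec idx * s k idx with ha
    have hcs : (∑ k, |a k|) ^ 2 ≤ (d : ℝ) * ∑ k, a k ^ 2 := by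
      have h1 := sq_sum_le_card_mul_sum_sq (s := Finset.univ) (f := fun k => |a k|)
      simp only [sq_abs, Finset.card_univ, Fintype.card_fin] at h1
      refine h1.trans ?_
      have hcard : ((d - 1 : ℕ) : ℝ) ≤ (d : ℝ) := by
        exact_mod_cast Nat.sub_le d 1
      have hnn : 0 ≤ ∑ k, a k ^ 2 := Finset.sum_nonneg fun k _ => sq_nonneg _
      exact mul_le_mul_of_nonneg_right hcard hnn
    have hd0 : (0 : ℝ) < Real.sqrt d := Real.sqrt_pos.2 (by positivity)
    rw [one_div, inv_mul_le_iff₀ hd0]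
    have h2 : ∑ k, |a k| ≤ Real.sqrt ((d : ℝ) * ∑ k, a k ^ 2) := by
      rw [← Real.sqrt_sq (Finset.sum_nonneg fun k _ => abs_nonneg _)]
      exact Real.sqrt_le_sqrt hcs
    rw [Real.sqrt_mul (by positivity : (0:ℝ) ≤ (d:ℝ))] at h2
    exact h2
  · -- upper bound
    rw [key]
    set a : Fin (d - 1) → ℝ := fun k => ∑ idx, xvec idx * s k idx with ha
    have h1 : ∑ k, a k ^ 2 ≤ (∑ k, |a k|) ^ 2 := by
      have := Finset.sum_sq_le_sq_sum_of_nonneg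
        (s := Finset.univ) (f := fun k => |a k|) (fun i _ => abs_nonneg _)
      simpa only [sq_abs] using this
    calc Real.sqrt (∑ k, a k ^ 2) ≤ Real.sqrt ((∑ k, |a k|) ^ 2) := Real.sqrt_le_sqrt h1
      _ = ∑ k, |a k| := Real.sqrt_sq (Finset.sum_nonneg fun k _ => abs_nonneg _)
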